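/- Let g, h₀ > 0, ω ≠ 0, and let f : ℝ → (0,∞) be continuously differentiable with f − h₀ compactly supported and f′(s₀) < 0 for some s₀. For any constant c₀ ∈ ℝ define X(t,s) = s + t·(c₀ + 2√(g f(s) + ω²f(s)²/4) + (g/ω)·log(2g + ω²f(s) + 2ω√(g f(s) + ω²f(s)²/4))). Then for every t > t₀ := 2√(g f(s₀) + ω²f(s₀)²/4)/(−f′(s₀)·(3g + ω²f(s₀))), the map s ↦ X(t,s) is not injective; that is, the characteristics of the simple wave cross and the wave breaks in finite time. In particular, every simple wave of the vorticity-modified shallow water equations carrying an increase of elevation (f′ < 0 somewhere for a right-moving wave) breaks, for any constant vorticity ω. -/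

import Mathlib

open Real

/-- Every simple wave of the vorticity-modified shallow water equations carrying an
increase of elevation breaks, for any constant vorticity: for `t` beyond the breaking
time `t₀` the characteristic map `s ↦ X(t,s)` is not injective, i.e., characteristics
cross. -/
theorem simple_wave_breaks
    (g h₀ ω c₀ : ℝ) (hg : 0 < g) (hh₀ : 0 < h₀) (hω : ω ≠ 0)
    (f : ℝ → ℝ) (hf : ContDiff ℝ 1 f) (hfpos : ∀ s : ℝ, 0 < f s)
    (hsupp : HasCompactSupport fun s => f s - h₀)
    (s₀ : ℝ) (hs₀ : deriv f s₀ < 0)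
    (X : ℝ → ℝ → ℝ)
    (hX : ∀ t s : ℝ, X t s
      = s + t * (c₀ + 2 * Real.sqrt (g * f s + ω ^ 2 * f s ^ 2 / 4)
        + g / ω * Real.log (2 * g + ω ^ 2 * f s
          + 2 * ω * Real.sqrt (g * f s + ω ^ 2 * f s ^ 2 / 4))))
    (t₀ : ℝ)
    (ht₀ : t₀ = 2 * Real.sqrt (g * f s₀ + ω ^ 2 * f s₀ ^ 2 / 4)
      / (-(deriv f s₀) * (3 * g + ω ^ 2 * f s₀))) :
    ∀ t > t₀, ¬ Function.Injective fun s => X t s := by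
  -- notation
  set Q : ℝ → ℝ := fun s => g * f s + ω ^ 2 * f s ^ 2 / 4 with hQdef
  set L : ℝ → ℝ := fun s => 2 * g + ω ^ 2 * f s + 2 * ω * Real.sqrt (Q s) with hLdef
  have hQpos : ∀ s, 0 < Q s := by
    intro s
    show 0 < g * f s + ω ^ 2 * f s ^ 2 / 4
    have h := hfpos s
    have : 0 < g * f s := mul_pos hg h
    nlinarith [sq_nonneg (ω * f s)]
  have hrpos : ∀ s, 0 < Real.sqrt (Q s) := fun s => Real.sqrt_pos.2 (hQpos s)
  have hrsq : ∀ s, Real.sqrt (Q s) ^ 2 = Q s := fun s =>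
    Real.sq_sqrt (hQpos s).le
  have hLpos : ∀ s, 0 < L s := by
    intro s
    show 0 < 2 * g + ω ^ 2 * f s + 2 * ω * Real.sqrt (Q s)
    have h1 := hrpos s
    have h2 : Real.sqrt (Q s) ^ 2 = g * f s + ω ^ 2 * f s ^ 2 / 4 := hrsq s
    have h3 := hfpos s
    have hB : 0 < 2 * g + ω ^ 2 * f s := by nlinarith [sq_nonneg ω]
    have key : (2 * g + ω ^ 2 * f s - 2 * ω * Real.sqrt (Q s))
        * (2 * g + ω ^ 2 * f s + 2 * ω * Real.sqrt (Q s)) = 4 * g ^ 2 := by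
      linear_combination (-4 * ω ^ 2) * h2
    nlinarith [key, hB, h1, mul_pos hg hg]
  -- the wave profile part of the characteristic speed
  set F : ℝ → ℝ := fun s =>
    c₀ + 2 * Real.sqrt (Q s) + g / ω * Real.log (L s) with hFdef
  have hXF : ∀ t s, X t s = s + t * F s := fun t s => hX t s
  -- continuity of F
  have hfc : Continuous f := hf.continuous
  have hQc : Continuous Q := by fun_prop
  have hrc : Continuous fun s => Real.sqrt (Q s) := Real.continuous_sqrt.comp hQc
  have hLc : Continuous L :=
    ((continuous_const.add (continuous_const.mul hfc)).add (continuous_const.mul hrc))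
  have hFc : Continuous F := by
    refine Continuous.add (Continuous.add continuous_const (continuous_const.mul hrc)) ?_
    refine Continuous.mul continuous_const ?_
    rw [continuous_iff_continuousAt]
    intro s
    exact (Real.continuousAt_log (ne_of_gt (hLpos s))).comp hLc.continuousAt
  -- derivative of F at s₀
  set q : ℝ := f s₀ with hq
  set q' : ℝ := deriv f s₀ with hq'
  set r : ℝ := Real.sqrt (Q s₀) with hr
  have hf' : HasDerivAt f q' s₀ :=
    (hf.differentiable one_ne_zero s₀).hasDerivAt
  have hQ' : HasDerivAt Q (g * q' + ω ^ 2 * (2 * f s₀ ^ 1 * q') / 4) s₀ := by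
    exact ((hf'.const_mul g).add (((hf'.pow 2).const_mul (ω ^ 2)).div_const 4))
  have hsqrt' : HasDerivAt (fun s => Real.sqrt (Q s))
      ((g * q' + ω ^ 2 * (2 * f s₀ ^ 1 * q') / 4) / (2 * r)) s₀ := by
    have := hQ'.sqrt (ne_of_gt (hQpos s₀))
    simpa [hr] using this
  have hL' : HasDerivAt L
      (ω ^ 2 * q' + 2 * ω * ((g * q' + ω ^ 2 * (2 * f s₀ ^ 1 * q') / 4) / (2 * r))) s₀ := by
    have h1 : HasDerivAt (fun s => ω ^ 2 * f s) (ω ^ 2 * q') s₀ := hf'.const_mul _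
    have h2 : HasDerivAt (fun s => 2 * ω * Real.sqrt (Q s))
        (2 * ω * ((g * q' + ω ^ 2 * (2 * f s₀ ^ 1 * q') / 4) / (2 * r))) s₀ :=
      hsqrt'.const_mul _
    have := (h1.add h2).const_add (2 * g)
    simpa [hLdef, add_assoc] using this
  have hlog' : HasDerivAt (fun s => Real.log (L s))
      ((ω ^ 2 * q' + 2 * ω * ((g * q' + ω ^ 2 * (2 * f s₀ ^ 1 * q') / 4) / (2 * r))) / L s₀)
      s₀ := hL'.log (ne_of_gt (hLpos s₀))
  set F' : ℝ := q' * (3 * g + ω ^ 2 * q) / (2 * r) with hF'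
  have hFderiv : HasDerivAt F F' s₀ := by
    have h2 : HasDerivAt (fun s => 2 * Real.sqrt (Q s))
        (2 * ((g * q' + ω ^ 2 * (2 * f s₀ ^ 1 * q') / 4) / (2 * r))) s₀ :=
      hsqrt'.const_mul 2
    have h3 : HasDerivAt (fun s => g / ω * Real.log (L s))
        (g / ω * ((ω ^ 2 * q' + 2 * ω * ((g * q' + ω ^ 2 * (2 * f s₀ ^ 1 * q') / 4)
          / (2 * r))) / L s₀)) s₀ := hlog'.const_mul _
    have h4 := (h2.add h3).const_add c₀
    have heq : 2 * ((g * q' + ω ^ 2 * (2 * f s₀ ^ 1 * q') / 4) / (2 * r))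
        + g / ω * ((ω ^ 2 * q' + 2 * ω * ((g * q' + ω ^ 2 * (2 * f s₀ ^ 1 * q') / 4)
          / (2 * r))) / L s₀) = F' := by
      have hLs₀ : L s₀ = 2 * g + ω ^ 2 * q + 2 * ω * r := rfl
      have hrne : r ≠ 0 := ne_of_gt (hrpos s₀)
      have hLne : L s₀ ≠ 0 := ne_of_gt (hLpos s₀)
      rw [hF', hLs₀] at *
      have hq1 : f s₀ = q := rfl
      rw [hq1, pow_one]
      field_simp
      ring
    rw [← heq]
    simpa [hFdef, add_assoc] using h4
  have hF'neg : F' < 0 := by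
    rw [hF']
    apply div_neg_of_neg_of_pos
    · have : 0 < 3 * g + ω ^ 2 * q := by nlinarith [hfpos s₀, sq_nonneg ω]
      exact mul_neg_of_neg_of_pos hs₀ this
    · linarith [hrpos s₀]
  have hA : 0 < 3 * g + ω ^ 2 * q := by nlinarith [hfpos s₀, sq_nonneg ω]
  have ht₀F' : t₀ * F' = -1 := by
    rw [ht₀, hF']
    have hq'ne : q' ≠ 0 := ne_of_lt hs₀
    have hAne : 3 * g + ω ^ 2 * q ≠ 0 := ne_of_gt hA
    have hrne : r ≠ 0 := ne_of_gt (hrpos s₀)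
    field_simp
  intro t ht hinj
  -- derivative of s ↦ X t s at s₀ is negative
  have hD : HasDerivAt (fun s => X t s) (1 + t * F') s₀ := by
    have : HasDerivAt (fun s => s + t * F s) (1 + t * F') s₀ :=
      (hasDerivAt_id s₀).add (hFderiv.const_mul t)
    exact this.congr_of_eventuallyEq (Filter.Eventually.of_forall fun s => (hXF t s))
  have hDneg : 1 + t * F' < 0 := by
    have : t * F' < t₀ * F' := by
      exact mul_lt_mul_of_neg_right ht hF'neg
    rw [ht₀F'] at this
    linarith
  -- Xt is continuous
  have hXtc : Continuous fun s => X t s := by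
    have : Continuous fun s => s + t * F s := continuous_id.add (continuous_const.mul hFc)
    simpa [funext fun s => hXF t s] using this
  rcases hXtc.strictMono_of_inj hinj with hm | ha
  · -- strictly monotone: derivative at s₀ must be nonnegative
    have hslope : Filter.Tendsto (slope (fun s => X t s) s₀) (nhdsWithin s₀ (Set.Ioi s₀))
        (nhds (1 + t * F')) := by
      have := hasDerivAt_iff_tendsto_slope.mp hD
      exact this.mono_left (nhdsWithin_mono s₀ (fun x hx => ne_of_gt hx))
    have hnonneg : 0 ≤ 1 + t * F' := by
      refine ge_of_tendsto hslope ?_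
      filter_upwards [self_mem_nhdsWithin] with b hb
      have hb' : s₀ < b := hb
      have : X t s₀ ≤ X t b := (hm hb').le
      rw [slope_def_field]
      exact div_nonneg (by linarith) (by linarith)
    linarith
  · -- strictly antitone: contradiction far outside the support
    obtain ⟨R, hR⟩ := hsupp.isCompact.isBounded.subset_closedBall 0
    have hout : ∀ s : ℝ, R < |s| → f s = h₀ := by
      intro s hs
      have hnmem : s ∉ tsupport fun s => f s - h₀ := by
        intro hmem
        have := hR hmem
        rw [Metric.mem_closedBall, Real.dist_eq, sub_zero] at this
        linarith
      have := image_eq_zero_of_notMem_tsupport hnmem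
      linarith
    set a : ℝ := |R| + 1 with ha'
    set b : ℝ := |R| + 2 with hb'
    have hfa : f a = h₀ := by
      refine hout a ?_
      rw [ha', abs_of_pos (by positivity)]
      linarith [abs_nonneg R, le_abs_self R]
    have hfb : f b = h₀ := by
      refine hout b ?_
      rw [hb', abs_of_pos (by positivity)]
      linarith [abs_nonneg R, le_abs_self R]
    have hab : a < b := by rw [ha', hb']; linarith
    have : X t b < X t a := ha hab
    rw [hXF t a, hXF t b, hFdef] at this
    simp only [hQdef, hLdef, hfa, hfb] at this
    linarith
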